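/- Let n ≥ 1 and S = {s_1 < ... < s_r} ⊆ [n-1], with s_0 = 0, s_{r+1} = n. The number of Cayley permutations w of [n] with weak ascent set Asc(w) = {i : w(i) ≤ w(i+1)} contained in S equals Σ_{k=0}^{n} Σ_{i=0}^{k} (-1)^i C(k,i) Π_{j=0}^{r} C(k-i, s_{j+1} - s_j). -/

import Mathlib

open Finset
def IsCayley {n : ℕ} (w : Fin n → ℕ) : Prop :=
  ∃ k ≤ n, Set.range w = Set.Icc 1 k

def ascSetW {n : ℕ} (w : Fin n → ℕ) : Finset ℕ :=
  (Finset.univ.filter (fun i : Fin (n - 1) =>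
    w ⟨i.val, by have := i.isLt; omega⟩ ≤ w ⟨i.val + 1, by have := i.isLt; omega⟩)).image
    (fun i => i.val + 1)

/-- adjacent-decreasing condition for `Fin`-valued functions -/
def AdjDec {b k : ℕ} (f : Fin b → Fin k) : Prop :=
  ∀ i : Fin (b - 1), f ⟨i.val + 1, by have := i.isLt; omega⟩ < f ⟨i.val, by have := i.isLt; omega⟩

instance {b k : ℕ} (f : Fin b → Fin k) : Decidable (AdjDec f) := by
  unfold AdjDec; infer_instance

/-- `Fin`-valued version of the condition `ascSetW w ⊆ S`. -/
def DecW {n k : ℕ} (S : Finset ℕ) (v : Fin n → Fin k) : Prop :=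
  ∀ i : Fin (n - 1), (i.val + 1) ∉ S →
    v ⟨i.val + 1, by have := i.isLt; omega⟩ < v ⟨i.val, by have := i.isLt; omega⟩

instance {n k : ℕ} (S : Finset ℕ) (v : Fin n → Fin k) : Decidable (DecW S v) := by
  unfold DecW; infer_instance

lemma adjDec_iff_strictAnti {b k : ℕ} (f : Fin b → Fin k) : AdjDec f ↔ StrictAnti f := by
  cases b with
  | zero =>
    constructor
    · intro _ a; exact a.elim0
    · intro _ i; exact i.elim0
  | succ c =>
    rw [Fin.strictAnti_iff_succ_lt]
    constructor
    · intro h i; exact h ⟨i.val, by have := i.isLt; omega⟩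
    · intro h i; exact h ⟨i.val, by have := i.isLt; omega⟩

lemma card_adjDec (b k : ℕ) :
    Fintype.card {f : Fin b → Fin k // AdjDec f} = k.choose b := by
  have e1 : {f : Fin b → Fin k // AdjDec f} ≃ {f : Fin b → Fin k // StrictAnti f} :=
    Equiv.subtypeEquivRight (fun f => adjDec_iff_strictAnti f)
  have e2 : {f : Fin b → Fin k // StrictAnti f} ≃ {g : Fin b → Fin k // StrictMono g} := by
    refine ⟨fun f => ⟨f.1 ∘ Fin.rev, ?_⟩, fun g => ⟨g.1 ∘ Fin.rev, ?_⟩, ?_, ?_⟩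
    · intro a b' hab
      exact f.2 (by simpa [Fin.rev_lt_rev] using hab)
    · intro a b' hab
      exact g.2 (by simpa [Fin.rev_lt_rev] using hab)
    · intro f; ext x; simp [Function.comp]
    · intro g; ext x; simp [Function.comp]
  have e3 : {g : Fin b → Fin k // StrictMono g} ≃ {T : Finset (Fin k) // T.card = b} := by
    refine ⟨fun g => ⟨Finset.univ.image g.1, ?_⟩,
      fun T => ⟨T.1.orderEmbOfFin T.2, (T.1.orderEmbOfFin T.2).strictMono⟩, ?_, ?_⟩
    · rw [Finset.card_image_of_injective _ g.2.injective, Finset.card_univ, Fintype.card_fin]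
    · intro g
      apply Subtype.ext
      exact (Finset.orderEmbOfFin_unique _ (fun x => Finset.mem_image_of_mem _ (mem_univ x))
        g.2).symm
    · intro T
      apply Subtype.ext
      apply Finset.coe_injective
      push_cast
      rw [Set.image_univ, Finset.range_orderEmbOfFin]
  rw [Fintype.card_congr ((e1.trans e2).trans e3), Fintype.card_finset_len, Fintype.card_fin]

section
variable {n r : ℕ} {s : ℕ → ℕ} {S : Finset ℕ}

lemma s_mono (hmono : ∀ j ≤ r, s j < s (j + 1)) :
    ∀ b ≤ r + 1, ∀ a ≤ b, s a ≤ s b := by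
  intro b
  induction b with
  | zero =>
    intro _ a ha
    have : a = 0 := by omega
    simp [this]
  | succ c ih =>
    intro hb a ha
    rcases Nat.eq_or_lt_of_le ha with h | h
    · rw [h]
    · exact le_trans (ih (by omega) a (by omega)) (le_of_lt (hmono c (by omega)))

/-- the block containing position `p` -/
noncomputable def blockOf (s : ℕ → ℕ) (r p : ℕ) : ℕ :=
  Nat.findGreatest (fun j => s j ≤ p) r

lemma blockOf_le (p : ℕ) : blockOf s r p ≤ r := Nat.findGreatest_le r

lemma blockOf_spec (hs0 : s 0 = 0) (p : ℕ) : s (blockOf s r p) ≤ p := by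
  classical
  exact Nat.findGreatest_spec (P := fun j => s j ≤ p) (Nat.zero_le r) (by omega)

lemma lt_blockOf_succ (hsn : s (r + 1) = n) (hmono : ∀ j ≤ r, s j < s (j + 1))
    {p : ℕ} (hp : p < n) : p < s (blockOf s r p + 1) := by
  classical
  rcases Nat.eq_or_lt_of_le (blockOf_le (s := s) (r := r) p) with h | h
  · rw [h, hsn]; exact hp
  · by_contra hcon
    push_neg at hcon
    exact Nat.findGreatest_is_greatest (P := fun j => s j ≤ p) (n := r)
      (k := blockOf s r p + 1) (Nat.lt_succ_of_le le_rfl) (by omega) hcon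

lemma blockOf_eq (hs0 : s 0 = 0) (hmono : ∀ j ≤ r, s j < s (j + 1)) {p j : ℕ} (hj : j ≤ r)
    (h1 : s j ≤ p) (h2 : p < s (j + 1)) : blockOf s r p = j := by
  classical
  have hge : j ≤ blockOf s r p := Nat.le_findGreatest hj h1
  rcases Nat.eq_or_lt_of_le hge with h | h
  · omega
  · exfalso
    have hle := blockOf_le (s := s) (r := r) p
    have : s (j + 1) ≤ s (blockOf s r p) :=
      s_mono hmono (blockOf s r p) (by omega) (j + 1) (by omega)
    have := blockOf_spec (s := s) (r := r) hs0 p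
    omega
end

section
variable {n r : ℕ} {s : ℕ → ℕ} {S : Finset ℕ}

lemma not_mem_S (hS : S = (Finset.Icc 1 r).image s) (hmono : ∀ j ≤ r, s j < s (j + 1))
    {j t : ℕ} (hj : j ≤ r) (h1 : s j < t) (h2 : t < s (j + 1)) : t ∉ S := by
  subst hS
  simp only [Finset.mem_image, Finset.mem_Icc, not_exists]
  rintro j' ⟨⟨hj1, hj2⟩, heq⟩
  rcases le_or_gt j' j with h | h
  · have : s j' ≤ s j := s_mono hmono j (by omega) j' h
    omega
  · have : s (j + 1) ≤ s j' := s_mono hmono j' (by omega) (j + 1) (by omega)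
    omega

lemma blockOf_succ_eq (hs0 : s 0 = 0) (hsn : s (r + 1) = n)
    (hmono : ∀ j ≤ r, s j < s (j + 1)) (hS : S = (Finset.Icc 1 r).image s)
    {p : ℕ} (hp : p + 1 < n) (hpS : (p + 1) ∉ S) :
    blockOf s r (p + 1) = blockOf s r p := by
  set j := blockOf s r p with hj
  have hjr : j ≤ r := blockOf_le p
  have h1 : s j ≤ p := blockOf_spec hs0 p
  have h2 : p < s (j + 1) := lt_blockOf_succ hsn hmono (by omega)
  have h3 : p + 1 < s (j + 1) := by
    rcases Nat.eq_or_lt_of_le (Nat.succ_le_of_lt h2) with h | h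
    · exfalso
      rcases Nat.eq_or_lt_of_le hjr with hr | hr
      · rw [hr, hsn] at h; omega
      · exact hpS (hS ▸ Finset.mem_image.mpr ⟨j + 1, Finset.mem_Icc.mpr ⟨by omega, by omega⟩,
          h.symm⟩)
    · exact h
  exact blockOf_eq hs0 hmono hjr (by omega) h3

/-- the block-decomposition equivalence -/
noncomputable def blockEquiv (hs0 : s 0 = 0) (hsn : s (r + 1) = n)
    (hmono : ∀ j ≤ r, s j < s (j + 1)) (hS : S = (Finset.Icc 1 r).image s) (k : ℕ) :
    {v : Fin n → Fin k // DecW S v} ≃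
    ((j : Fin (r + 1)) → {f : Fin (s (j.val + 1) - s j.val) → Fin k // AdjDec f}) := by
  have hsle : ∀ j, j ≤ r + 1 → s j ≤ n := fun j hj => hsn ▸ s_mono hmono (r+1) le_rfl j hj
  refine ⟨fun v j => ⟨fun o => v.1 ⟨s j.val + o.val, ?_⟩, ?_⟩,
    fun F => ⟨fun p => (F ⟨blockOf s r p.val, by have := blockOf_le (s := s) (r := r) p.val; omega⟩).1
      ⟨p.val - s (blockOf s r p.val), ?_⟩, ?_⟩, ?_, ?_⟩
  · have := o.isLt
    have := hsle (j.val + 1) (by omega)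
    omega
  · -- AdjDec of the block restriction
    intro i
    have hi := i.isLt
    have hjr : j.val ≤ r := by have := j.isLt; omega
    have hlt : s j.val + i.val + 1 < s (j.val + 1) := by omega
    have hn1 : s j.val + i.val < n - 1 := by
      have := hsle (j.val + 1) (by omega); omega
    have hnS : (s j.val + i.val + 1) ∉ S :=
      not_mem_S hS hmono hjr (by omega) hlt
    exact v.2 ⟨s j.val + i.val, hn1⟩ hnS
  · show p.val - s (blockOf s r p.val) < s (blockOf s r p.val + 1) - s (blockOf s r p.val)
    have h1 := blockOf_spec (s := s) (r := r) hs0 p.val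
    have h2 := lt_blockOf_succ (s := s) (r := r) hsn hmono p.isLt
    omega
  · -- DecW of the assembled function
    intro i hiS
    have main : ∀ (j1 j2 : Fin (r + 1)), j1 = j2 →
        ∀ (o1 : Fin (s (j1.val + 1) - s j1.val)) (o2 : Fin (s (j2.val + 1) - s j2.val)),
        o1.val = o2.val + 1 → (F j1).1 o1 < (F j2).1 o2 := by
      rintro j1 _ rfl o1 o2 h
      have h2 : o2.val < s (j1.val + 1) - s j1.val - 1 := by have := o1.isLt; omega
      have := (F j1).2 ⟨o2.val, h2⟩
      have e1 : o1 = ⟨o2.val + 1, by have := o1.isLt; omega⟩ := Fin.ext h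
      rw [e1]
      convert this using 2
    have hb : blockOf s r (i.val + 1) = blockOf s r i.val :=
      blockOf_succ_eq hs0 hsn hmono hS (by have := i.isLt; omega) hiS
    have h1 := blockOf_spec (s := s) (r := r) hs0 i.val
    refine main _ _ (Fin.ext hb) _ _ ?_
    simp only [hb]
    omega
  · -- left inverse
    intro v
    apply Subtype.ext
    funext p
    refine congrArg v.1 (Fin.ext ?_)
    show s (blockOf s r p.val) + (p.val - s (blockOf s r p.val)) = p.val
    have h1 := blockOf_spec (s := s) (r := r) hs0 p.val
    omega
  · -- right inverse
    intro F
    funext j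
    apply Subtype.ext
    funext o
    have hjr : j.val ≤ r := by have := j.isLt; omega
    have hb : blockOf s r (s j.val + o.val) = j.val :=
      blockOf_eq hs0 hmono hjr (by omega) (by have := o.isLt; omega)
    have main : ∀ (j1 j2 : Fin (r + 1)), j1 = j2 →
        ∀ (o1 : Fin (s (j1.val + 1) - s j1.val)) (o2 : Fin (s (j2.val + 1) - s j2.val)),
        o1.val = o2.val → (F j1).1 o1 = (F j2).1 o2 := by
      rintro j1 _ rfl o1 o2 h
      exact congrArg _ (Fin.ext h)
    refine main _ _ (Fin.ext hb) _ _ ?_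
    simp only [hb]
    omega

lemma card_dec (hs0 : s 0 = 0) (hsn : s (r + 1) = n)
    (hmono : ∀ j ≤ r, s j < s (j + 1)) (hS : S = (Finset.Icc 1 r).image s) (k : ℕ) :
    Fintype.card {v : Fin n → Fin k // DecW S v} =
      ∏ j ∈ Finset.range (r + 1), k.choose (s (j + 1) - s j) := by
  rw [Fintype.card_congr (blockEquiv hs0 hsn hmono hS k), Fintype.card_pi]
  rw [← Fin.prod_univ_eq_prod_range (fun j => k.choose (s (j + 1) - s j)) (r + 1)]
  exact Finset.prod_congr rfl fun j _ => card_adjDec _ _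
end

section
variable {n r : ℕ} {s : ℕ → ℕ} {S : Finset ℕ}

lemma mem_of_image_eq {k : ℕ} {T : Finset (Fin k)} {v : Fin n → Fin k}
    (hv : Finset.univ.image v = T) (i : Fin n) : v i ∈ T := by
  rw [← hv]; exact Finset.mem_image_of_mem _ (mem_univ i)

/-- functions with image `T` correspond to surjections onto `Fin T.card` -/
def fiberEquiv (k : ℕ) (T : Finset (Fin k)) :
    {v : Fin n → Fin k // DecW S v ∧ Finset.univ.image v = T} ≃
    {u : Fin n → Fin T.card // DecW S u ∧ Function.Surjective u} := by
  classical
  let e := T.orderIsoOfFin rfl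
  have himg : ∀ u : Fin n → Fin T.card, Function.Surjective u →
      Finset.univ.image (fun i => (e (u i) : Fin k)) = T := by
    intro u hu
    ext x
    simp only [Finset.mem_image, Finset.mem_univ, true_and]
    constructor
    · rintro ⟨i, rfl⟩; exact (e (u i)).2
    · intro hx
      obtain ⟨c, hc⟩ := e.surjective ⟨x, hx⟩
      obtain ⟨i, hi⟩ := hu c
      exact ⟨i, by rw [hi, hc]⟩
  refine ⟨fun v => ⟨fun i => e.symm ⟨v.1 i, mem_of_image_eq v.2.2 i⟩, ?_, ?_⟩,
    fun u => ⟨fun i => (e (u.1 i) : Fin k), ?_, himg u.1 u.2.2⟩, ?_, ?_⟩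
  · intro i hiS
    have := v.2.1 i hiS
    exact (OrderIso.lt_iff_lt e.symm).mpr (by simpa using this)
  · intro c
    have hc : (e c : Fin k) ∈ Finset.univ.image v.1 := by
      rw [v.2.2]; exact (e c).2
    obtain ⟨i, _, hi⟩ := Finset.mem_image.mp hc
    refine ⟨i, ?_⟩
    show e.symm ⟨v.1 i, _⟩ = c
    have : (⟨v.1 i, mem_of_image_eq v.2.2 i⟩ : {x // x ∈ T}) = e c := Subtype.ext hi
    rw [this, OrderIso.symm_apply_apply]
  · intro i hiS
    have := u.2.1 i hiS
    exact Subtype.coe_lt_coe.mpr ((OrderIso.lt_iff_lt e).mpr this)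
  · intro v
    apply Subtype.ext
    funext i
    simp only [OrderIso.apply_symm_apply]
  · intro u
    apply Subtype.ext
    funext i
    show e.symm ⟨(e (u.1 i) : Fin k), _⟩ = u.1 i
    have : (⟨(e (u.1 i) : Fin k), mem_of_image_eq (himg u.1 u.2.2) i⟩ : {x // x ∈ T}) =
        e (u.1 i) := Subtype.ext rfl
    rw [this, OrderIso.symm_apply_apply]
end

section
variable {n r : ℕ} {s : ℕ → ℕ} {S : Finset ℕ}

lemma card_dec_eq_sum (k : ℕ) :
    Fintype.card {v : Fin n → Fin k // DecW S v} =
      ∑ m ∈ Finset.range (k + 1),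
        k.choose m * Fintype.card {u : Fin n → Fin m // DecW S u ∧ Function.Surjective u} := by
  classical
  rw [Fintype.card_subtype]
  rw [Finset.card_eq_sum_card_fiberwise
    (f := fun v : Fin n → Fin k => Finset.univ.image v) (t := Finset.univ)
    (fun _ _ => mem_univ _)]
  have step1 : ∀ T : Finset (Fin k),
      ((Finset.univ.filter (fun v => DecW S v)).filter
        (fun v : Fin n → Fin k => Finset.univ.image v = T)).card =
      Fintype.card {u : Fin n → Fin T.card // DecW S u ∧ Function.Surjective u} := by
    intro T
    rw [Finset.filter_filter]
    rw [← Fintype.card_subtype]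
    exact Fintype.card_congr (fiberEquiv k T)
  calc ∑ T : Finset (Fin k), ((Finset.univ.filter (fun v => DecW S v)).filter
        (fun v : Fin n → Fin k => Finset.univ.image v = T)).card
      = ∑ T : Finset (Fin k),
        Fintype.card {u : Fin n → Fin T.card // DecW S u ∧ Function.Surjective u} :=
        Finset.sum_congr rfl (fun T _ => step1 T)
    _ = ∑ m ∈ Finset.range (k + 1), ∑ T ∈ Finset.univ.filter
          (fun T : Finset (Fin k) => T.card = m),
          Fintype.card {u : Fin n → Fin T.card // DecW S u ∧ Function.Surjective u} := by
        refine (Finset.sum_fiberwise_of_maps_to ?_ _).symm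
        intro T _
        rw [Finset.mem_range]
        have := Finset.card_le_univ T
        simp only [Finset.card_univ, Fintype.card_fin] at this
        omega
    _ = ∑ m ∈ Finset.range (k + 1),
        k.choose m * Fintype.card {u : Fin n → Fin m // DecW S u ∧ Function.Surjective u} := by
        refine Finset.sum_congr rfl (fun m _ => ?_)
        rw [Finset.sum_congr rfl (fun T hT => ?_), Finset.sum_const]
        · rw [smul_eq_mul]
          congr 1
          rw [← Fintype.card_subtype]
          have := Fintype.card_finset_len (α := Fin k) m
          simpa using this
        · simp only [Finset.mem_filter] at hT
          rw [hT.2]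
end

section
variable {n r : ℕ} {s : ℕ → ℕ} {S : Finset ℕ}

lemma asc_iff_dec {m : ℕ} {w : Fin n → ℕ} {u : Fin n → Fin m}
    (hwu : ∀ i, w i = (u i : ℕ) + 1) : ascSetW w ⊆ S ↔ DecW S u := by
  constructor
  · intro h i hiS
    by_contra hcon
    have hle : (u ⟨i.val, by have := i.isLt; omega⟩ : ℕ) ≤
        (u ⟨i.val + 1, by have := i.isLt; omega⟩ : ℕ) := by
      rw [Fin.lt_def] at hcon; omega
    have hw : w ⟨i.val, by have := i.isLt; omega⟩ ≤ w ⟨i.val + 1, by have := i.isLt; omega⟩ := by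
      rw [hwu, hwu]; omega
    exact hiS (h (Finset.mem_image_of_mem _ (Finset.mem_filter.mpr ⟨mem_univ i, hw⟩)))
  · intro h x hx
    simp only [ascSetW, Finset.mem_image, Finset.mem_filter] at hx
    obtain ⟨i, ⟨-, hle⟩, rfl⟩ := hx
    by_contra hxS
    have hlt := h i hxS
    rw [Fin.lt_def] at hlt
    rw [hwu, hwu] at hle
    omega

lemma range_iff_surj (hn : 1 ≤ n) {m : ℕ} {w : Fin n → ℕ} {u : Fin n → Fin m}
    (hwu : ∀ i, w i = (u i : ℕ) + 1) :
    Set.range w = Set.Icc 1 m ↔ Function.Surjective u := by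
  constructor
  · intro hr c
    have hc : (c : ℕ) + 1 ∈ Set.Icc 1 m := ⟨by omega, by have := c.isLt; omega⟩
    rw [← hr] at hc
    obtain ⟨i, hi⟩ := hc
    exact ⟨i, Fin.ext (by rw [hwu] at hi; omega)⟩
  · intro hs
    ext x
    simp only [Set.mem_range, Set.mem_Icc]
    constructor
    · rintro ⟨i, rfl⟩
      rw [hwu]
      have := (u i).isLt
      omega
    · rintro ⟨h1, h2⟩
      obtain ⟨i, hi⟩ := hs ⟨x - 1, by omega⟩
      exact ⟨i, by rw [hwu, hi]; simp; omega⟩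

/-- Cayley permutations with range `{1,…,m}` correspond to surjections onto `Fin m`. -/
def cayleyEquiv (hn : 1 ≤ n) (m : ℕ) :
    {w : Fin n → ℕ // Set.range w = Set.Icc 1 m ∧ ascSetW w ⊆ S} ≃
    {u : Fin n → Fin m // DecW S u ∧ Function.Surjective u} := by
  have hbound : ∀ (w : Fin n → ℕ), Set.range w = Set.Icc 1 m →
      ∀ i, 1 ≤ w i ∧ w i ≤ m := by
    intro w hr i
    have : w i ∈ Set.Icc 1 m := by rw [← hr]; exact ⟨i, rfl⟩
    exact this
  refine ⟨fun w => ⟨fun i => ⟨w.1 i - 1, by have := hbound w.1 w.2.1 i; omega⟩, ?_, ?_⟩,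
    fun u => ⟨fun i => (u.1 i : ℕ) + 1, ?_, ?_⟩, ?_, ?_⟩
  · exact (asc_iff_dec (fun i => by have := hbound w.1 w.2.1 i; simp; omega)).mp w.2.2
  · exact (range_iff_surj hn (fun i => by have := hbound w.1 w.2.1 i; simp; omega)).mp w.2.1
  · exact (range_iff_surj hn (fun i => rfl)).mpr u.2.2
  · exact (asc_iff_dec (fun i => rfl)).mpr u.2.1
  · intro w
    apply Subtype.ext
    funext i
    have := hbound w.1 w.2.1 i
    simp
    omega
  · intro u
    apply Subtype.ext
    funext i
    apply Fin.ext
    simp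

lemma ncard_B (hn : 1 ≤ n) (m : ℕ) :
    ({w : Fin n → ℕ | Set.range w = Set.Icc 1 m ∧ ascSetW w ⊆ S}).ncard =
      Fintype.card {u : Fin n → Fin m // DecW S u ∧ Function.Surjective u} := by
  rw [← Nat.card_coe_set_eq, ← Nat.card_eq_fintype_card]
  exact Nat.card_congr (cayleyEquiv (S := S) hn m)
end

section
variable {n r : ℕ} {s : ℕ → ℕ} {S : Finset ℕ}

lemma cayley_set_eq (hn : 1 ≤ n) :
    {w : Fin n → ℕ | IsCayley w ∧ ascSetW w ⊆ S} =
      ⋃ m ∈ Finset.range (n + 1),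
        {w : Fin n → ℕ | Set.range w = Set.Icc 1 m ∧ ascSetW w ⊆ S} := by
  ext w
  simp only [Set.mem_setOf_eq, Set.mem_iUnion, Finset.mem_range]
  constructor
  · rintro ⟨⟨k, hk, hr⟩, ha⟩
    exact ⟨k, by omega, hr, ha⟩
  · rintro ⟨m, hm, hr, ha⟩
    exact ⟨⟨m, by omega, hr⟩, ha⟩

lemma B_finite (hn : 1 ≤ n) (m : ℕ) :
    ({w : Fin n → ℕ | Set.range w = Set.Icc 1 m ∧ ascSetW w ⊆ S}).Finite := by
  rw [← Set.finite_coe_iff]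
  exact Finite.of_equiv _ (cayleyEquiv (S := S) hn m).symm

lemma B_disjoint (hn : 1 ≤ n) {m1 m2 : ℕ} (h : m1 ≠ m2) :
    Disjoint {w : Fin n → ℕ | Set.range w = Set.Icc 1 m1 ∧ ascSetW w ⊆ S}
      {w : Fin n → ℕ | Set.range w = Set.Icc 1 m2 ∧ ascSetW w ⊆ S} := by
  rw [Set.disjoint_left]
  rintro w ⟨h1, -⟩ ⟨h2, -⟩
  apply h
  have hicc : Set.Icc (1:ℕ) m1 = Set.Icc 1 m2 := by rw [← h1, ← h2]
  have hw : w ⟨0, by omega⟩ ∈ Set.Icc 1 m1 := by rw [← h1]; exact ⟨_, rfl⟩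
  have hm1 : 1 ≤ m1 := by have := hw.2; have := hw.1; omega
  have ha : m1 ∈ Set.Icc (1:ℕ) m2 := by rw [← hicc]; exact ⟨hm1, le_refl _⟩
  have hb : m2 ∈ Set.Icc (1:ℕ) m1 := by
    rw [hicc]
    exact ⟨by have := ha.2; have := ha.1; omega, le_refl _⟩
  have := ha.2; have := hb.2
  omega

lemma ncard_cayley (hn : 1 ≤ n) :
    ({w : Fin n → ℕ | IsCayley w ∧ ascSetW w ⊆ S}).ncard =
      ∑ m ∈ Finset.range (n + 1),
        Fintype.card {u : Fin n → Fin m // DecW S u ∧ Function.Surjective u} := by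
  rw [cayley_set_eq (S := S) hn]
  have key : ∀ N, N ≤ n + 1 → (⋃ m ∈ Finset.range N,
      {w : Fin n → ℕ | Set.range w = Set.Icc 1 m ∧ ascSetW w ⊆ S}).ncard =
      ∑ m ∈ Finset.range N,
        ({w : Fin n → ℕ | Set.range w = Set.Icc 1 m ∧ ascSetW w ⊆ S}).ncard := by
    intro N
    induction N with
    | zero => simp
    | succ N ih =>
      intro hN
      rw [Finset.range_add_one, Finset.set_biUnion_insert, Finset.sum_insert (by simp)]
      rw [Set.ncard_union_eq ?_ (B_finite hn N) ?_, ih (by omega)]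
      · rw [Set.disjoint_right]
        rintro w hw hwN
        simp only [Set.mem_iUnion, Finset.mem_range] at hw
        obtain ⟨m, hm, hwm⟩ := hw
        exact (Set.disjoint_left.mp (B_disjoint hn (by omega : N ≠ m))) hwN hwm
      · exact Set.Finite.biUnion (Finset.range N).finite_toSet (fun m _ => B_finite hn m)
  rw [key (n + 1) le_rfl]
  exact Finset.sum_congr rfl fun m _ => ncard_B hn m
end

lemma choose_swap {k i m : ℕ} (hi : i ≤ k) (hm : m ≤ k) :
    k.choose i * (k - i).choose m = k.choose m * (k - m).choose i := by
  rcases le_or_gt (i + m) k with h | h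
  · have h1 := Nat.choose_mul (n := k) (k := i + m) (s := i) (by omega)
    have h2 := Nat.choose_mul (n := k) (k := i + m) (s := m) (by omega)
    rw [Nat.add_sub_cancel_left] at h1
    rw [Nat.add_sub_cancel] at h2
    have h3 : (i + m).choose i = (i + m).choose m := by
      rw [← Nat.choose_symm (by omega : i ≤ i + m)]
      congr 1
      omega
    rw [← h1, ← h2, h3]
  · rw [Nat.choose_eq_zero_of_lt (by omega : k - i < m),
      Nat.choose_eq_zero_of_lt (by omega : k - m < i)]
    simp

lemma cayley_inner_sum (g : ℕ → ℕ) (a : ℕ → ℕ) (k : ℕ)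
    (ha : ∀ j ≤ k, a j = ∑ m ∈ Finset.range (j + 1), j.choose m * g m) :
    ∑ i ∈ Finset.range (k + 1), (-1 : ℤ) ^ i * k.choose i * a (k - i) = (g k : ℤ) := by
  have step1 : ∀ i ∈ Finset.range (k + 1),
      (-1 : ℤ) ^ i * k.choose i * a (k - i) =
      ∑ m ∈ Finset.range (k + 1),
        (-1 : ℤ) ^ i * ((k.choose m * (k - m).choose i : ℕ) * g m) := by
    intro i hi
    rw [Finset.mem_range] at hi
    have hext : (a (k - i) : ℤ) =
        ∑ m ∈ Finset.range (k + 1), ((k - i).choose m * g m : ℕ) := by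
      rw [ha (k - i) (by omega)]
      push_cast
      refine Finset.sum_subset (Finset.range_subset_range.mpr (by omega)) ?_
      intro x _ hx
      rw [Finset.mem_range, not_lt] at hx
      rw [Nat.choose_eq_zero_of_lt (by omega : k - i < x)]
      simp
    rw [hext]
    push_cast
    rw [Finset.mul_sum]
    refine Finset.sum_congr rfl fun m hm => ?_
    rw [Finset.mem_range] at hm
    have h := choose_swap (by omega : i ≤ k) (by omega : m ≤ k)
    have h' : ((k.choose i : ℤ) * (k - i).choose m) = (k.choose m : ℤ) * (k - m).choose i := by
      exact_mod_cast congrArg (Nat.cast : ℕ → ℤ) h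
    push_cast
    linear_combination ((g m : ℤ) * (-1) ^ i) * h'
  rw [Finset.sum_congr rfl step1, Finset.sum_comm]
  have step2 : ∀ m ∈ Finset.range (k + 1),
      ∑ i ∈ Finset.range (k + 1),
        (-1 : ℤ) ^ i * ((k.choose m * (k - m).choose i : ℕ) * g m) =
      (if k - m = 0 then 1 else 0) * (k.choose m * g m : ℕ) := by
    intro m hm
    have : ∑ i ∈ Finset.range (k + 1),
        (-1 : ℤ) ^ i * ((k.choose m * (k - m).choose i : ℕ) * g m) =
        (∑ i ∈ Finset.range (k + 1), (-1 : ℤ) ^ i * (k - m).choose i) *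
          (k.choose m * g m : ℕ) := by
      rw [Finset.sum_mul]
      refine Finset.sum_congr rfl fun i _ => ?_
      push_cast
      ring
    rw [this]
    congr 1
    have htr : ∑ i ∈ Finset.range (k + 1), (-1 : ℤ) ^ i * (k - m).choose i =
        ∑ i ∈ Finset.range (k - m + 1), (-1 : ℤ) ^ i * (k - m).choose i := by
      refine (Finset.sum_subset (Finset.range_subset_range.mpr (by omega)) ?_).symm
      intro x _ hx
      rw [Finset.mem_range, not_lt] at hx
      rw [Nat.choose_eq_zero_of_lt (by omega : k - m < x)]
      simp
    rw [htr, Int.alternating_sum_range_choose]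
  rw [Finset.sum_congr rfl step2]
  rw [Finset.sum_eq_single k]
  · simp
  · intro m hm hne
    rw [Finset.mem_range] at hm
    rw [if_neg (by omega)]
    simp
  · intro h
    exact absurd (Finset.self_mem_range_succ k) h

theorem cayley_prescribed_weak_ascent_set (n r : ℕ) (hn : 1 ≤ n) (s : ℕ → ℕ)
    (hs0 : s 0 = 0) (hsn : s (r + 1) = n)
    (hmono : ∀ j ≤ r, s j < s (j + 1)) (S : Finset ℕ)
    (hS : S = (Finset.Icc 1 r).image s) :
    (Set.ncard {w : Fin n → ℕ | IsCayley w ∧ ascSetW w ⊆ S} : ℤ) =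
      ∑ k ∈ Finset.range (n + 1), ∑ i ∈ Finset.range (k + 1),
        (-1 : ℤ) ^ i * k.choose i *
          ∏ j ∈ Finset.range (r + 1), (k - i).choose (s (j + 1) - s j) := by
  classical
  have hprod : ∀ k : ℕ,
      (∏ j ∈ Finset.range (r + 1), k.choose (s (j + 1) - s j)) =
      ∑ m ∈ Finset.range (k + 1), k.choose m *
        Fintype.card {u : Fin n → Fin m // DecW S u ∧ Function.Surjective u} := by
    intro k
    rw [← card_dec hs0 hsn hmono hS k]
    exact card_dec_eq_sum k
  rw [ncard_cayley (S := S) hn]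
  have key : ∀ k ∈ Finset.range (n + 1),
      ∑ i ∈ Finset.range (k + 1), (-1 : ℤ) ^ i * k.choose i *
          ((∏ j ∈ Finset.range (r + 1), (k - i).choose (s (j + 1) - s j) : ℕ) : ℤ) =
      ((Fintype.card {u : Fin n → Fin k // DecW S u ∧ Function.Surjective u} : ℕ) : ℤ) := by
    intro k _
    have h2 := cayley_inner_sum
      (fun m => Fintype.card {u : Fin n → Fin m // DecW S u ∧ Function.Surjective u})
      (fun j => ∏ j' ∈ Finset.range (r + 1), j.choose (s (j' + 1) - s j')) k
      (fun j _ => hprod j)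
    rw [← h2]
  rw [Finset.sum_congr rfl key]
  push_cast
  rfl
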